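/- Let s_n(v,w) be defined by s_0 = 1, s_1 = w, and for n ≥ 2, s_n(v,w) = (1/2) v s_{n-1}(v,w) + (1/2) ∑_{k=2}^{n-1} w^{k-1} s_{n-k}(v,w)/2^{k-1} + w^{n-1}/2^{n-1}. Then S(z,v,w) = ∑_{n≥1} s_n(v,w) z^n = 2zw(2 + (1-w)z) / (4 + w(v-1)z^2 - 2z(v+w)) as a formal power series in z. -/

import Mathlib

open PowerSeries

/-- `z` as a power series over polynomials in `v = X 0` and `w = X 1`. -/
noncomputable def Zq : PowerSeries (MvPolynomial (Fin 2) ℚ) := PowerSeries.X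

/-- `v` as a power series over polynomials in `v, w`. -/
noncomputable def Vq : PowerSeries (MvPolynomial (Fin 2) ℚ) := PowerSeries.C (MvPolynomial.X 0)

/-- `w` as a power series over polynomials in `v, w`. -/
noncomputable def Wq : PowerSeries (MvPolynomial (Fin 2) ℚ) := PowerSeries.C (MvPolynomial.X 1)

private lemma shelf_hc : (2 : MvPolynomial (Fin 2) ℚ) * MvPolynomial.C (1/2) = 1 := by
  rw [← map_ofNat (MvPolynomial.C : ℚ →+* MvPolynomial (Fin 2) ℚ) 2, ← map_mul]
  norm_num

private lemma shelf_key (s : ℕ → MvPolynomial (Fin 2) ℚ)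
    (hrec : ∀ n, 2 ≤ n → s n =
      MvPolynomial.C (1/2) * MvPolynomial.X 0 * s (n - 1)
      + MvPolynomial.C (1/2) * ∑ k ∈ Finset.Icc 2 (n - 1),
          MvPolynomial.C (1 / 2 ^ (k - 1)) * (MvPolynomial.X 1) ^ (k - 1) * s (n - k)
      + MvPolynomial.C (1 / 2 ^ (n - 1)) * (MvPolynomial.X 1) ^ (n - 1)) (m : ℕ) :
    4 * s (m+3) = 2 * (MvPolynomial.X 0 + MvPolynomial.X 1) * s (m+2)
      + MvPolynomial.X 1 * (1 - MvPolynomial.X 0) * s (m+1) := by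
  set X0 : MvPolynomial (Fin 2) ℚ := MvPolynomial.X 0 with hX0
  set X1 : MvPolynomial (Fin 2) ℚ := MvPolynomial.X 1 with hX1
  have e1 : s (m+3) = MvPolynomial.C (1/2) * X0 * s (m+2)
      + MvPolynomial.C (1/2) * ∑ k ∈ Finset.Icc 2 (m+2),
          MvPolynomial.C (1 / 2 ^ (k - 1)) * X1 ^ (k - 1) * s (m+3 - k)
      + MvPolynomial.C ((1:ℚ) / 2 ^ (m+2)) * X1 ^ (m+2) := hrec (m+3) (by omega)
  have e2 : s (m+2) = MvPolynomial.C (1/2) * X0 * s (m+1)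
      + MvPolynomial.C (1/2) * ∑ k ∈ Finset.Icc 2 (m+1),
          MvPolynomial.C (1 / 2 ^ (k - 1)) * X1 ^ (k - 1) * s (m+2 - k)
      + MvPolynomial.C ((1:ℚ) / 2 ^ (m+1)) * X1 ^ (m+1) := hrec (m+2) (by omega)
  have L : (∑ k ∈ Finset.Icc 2 (m+2),
        MvPolynomial.C (1 / 2 ^ (k - 1)) * X1 ^ (k - 1) * s (m+3 - k))
      = ∑ i ∈ Finset.range (m+1),
          MvPolynomial.C ((1:ℚ) / 2 ^ (i+1)) * X1 ^ (i+1) * s (m+1 - i) := by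
    rw [← Finset.Ico_add_one_right_eq_Icc, Finset.sum_Ico_eq_sum_range,
      show m + 2 + 1 - 2 = m + 1 from by omega]
    exact Finset.sum_congr rfl fun i _ => by
      rw [show 2 + i - 1 = i + 1 from by omega, show m + 3 - (2 + i) = m + 1 - i from by omega]
  have R : (∑ k ∈ Finset.Icc 2 (m+1),
        MvPolynomial.C (1 / 2 ^ (k - 1)) * X1 ^ (k - 1) * s (m+2 - k))
      = ∑ i ∈ Finset.range m,
          MvPolynomial.C ((1:ℚ) / 2 ^ (i+1)) * X1 ^ (i+1) * s (m - i) := by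
    rw [← Finset.Ico_add_one_right_eq_Icc, Finset.sum_Ico_eq_sum_range,
      show m + 1 + 1 - 2 = m from by omega]
    exact Finset.sum_congr rfl fun i _ => by
      rw [show 2 + i - 1 = i + 1 from by omega, show m + 2 - (2 + i) = m - i from by omega]
  have hAs : (∑ k ∈ Finset.Icc 2 (m+2),
          MvPolynomial.C (1 / 2 ^ (k - 1)) * X1 ^ (k - 1) * s (m+3 - k))
      = MvPolynomial.C (1/2) * X1 * s (m+1)
        + MvPolynomial.C (1/2) * X1 * ∑ k ∈ Finset.Icc 2 (m+1),
            MvPolynomial.C (1 / 2 ^ (k - 1)) * X1 ^ (k - 1) * s (m+2 - k) := by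
    rw [L, R, Finset.sum_range_succ', Finset.mul_sum]
    have hterm : ∀ i ∈ Finset.range m,
        MvPolynomial.C ((1:ℚ) / 2 ^ (i+1+1)) * X1 ^ (i+1+1) * s (m+1 - (i+1))
        = MvPolynomial.C (1/2) * X1
            * (MvPolynomial.C ((1:ℚ) / 2 ^ (i+1)) * X1 ^ (i+1) * s (m - i)) := by
      intro i _
      rw [show m + 1 - (i+1) = m - i from by omega,
        show (1:ℚ) / 2 ^ (i+1+1) = (1/2) * (1 / 2 ^ (i+1)) from by ring, map_mul]
      ring
    rw [Finset.sum_congr rfl hterm, ← Finset.mul_sum]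
    norm_num
    ring
  set A2 : MvPolynomial (Fin 2) ℚ :=
    ∑ k ∈ Finset.Icc 2 (m+1), MvPolynomial.C (1 / 2 ^ (k - 1)) * X1 ^ (k - 1) * s (m+2 - k)
    with hA2
  rw [hAs] at e1
  have hq : (MvPolynomial.C ((1:ℚ) / 2 ^ (m+2)) : MvPolynomial (Fin 2) ℚ)
      = MvPolynomial.C ((1:ℚ)/2) * MvPolynomial.C ((1:ℚ) / 2 ^ (m+1)) := by
    rw [← map_mul]; congr 1; ring
  rw [hq, show X1 ^ (m+2) = X1 ^ (m+1) * X1 from pow_succ X1 (m+1)] at e1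
  linear_combination (4 : MvPolynomial (Fin 2) ℚ) * e1 - 2 * X1 * e2 +
    (2 * X0 * s (m+2) + (2 * MvPolynomial.C ((1:ℚ)/2) + 1) * X1 * s (m+1) - X0 * X1 * s (m+1)
      + 2 * MvPolynomial.C ((1:ℚ) / 2 ^ (m+1)) * X1 * X1 ^ (m+1)
      + 2 * MvPolynomial.C ((1:ℚ)/2) * X1 * A2) * shelf_hc

/-- Let `s n = E(v^{L_n} w^{C_n})` be the joint probability generating polynomials of
pure-luck and certified correct guesses, with `s 0 = 1`, `s 1 = w` and, for `n ≥ 2`,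
`s n = (1/2) v s (n-1) + (1/2) ∑_{k=2}^{n-1} w^(k-1) s (n-k)/2^(k-1) + w^(n-1)/2^(n-1)`.
Then `S(z,v,w) = ∑_{n≥1} s n zⁿ = 2zw(2 + (1-w)z)/(4 + w(v-1)z² - 2z(v+w))` as a formal
power series in `z`, i.e. clearing the denominator (invertible constant term `4`). -/
theorem shelf_refined_generating_function (s : ℕ → MvPolynomial (Fin 2) ℚ)
    (h0 : s 0 = 1) (h1 : s 1 = MvPolynomial.X 1)
    (hrec : ∀ n, 2 ≤ n → s n =
      MvPolynomial.C (1/2) * MvPolynomial.X 0 * s (n - 1)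
      + MvPolynomial.C (1/2) * ∑ k ∈ Finset.Icc 2 (n - 1),
          MvPolynomial.C (1 / 2 ^ (k - 1)) * (MvPolynomial.X 1) ^ (k - 1) * s (n - k)
      + MvPolynomial.C (1 / 2 ^ (n - 1)) * (MvPolynomial.X 1) ^ (n - 1)) :
    (PowerSeries.mk fun n => if n = 0 then 0 else s n)
        * (4 + Wq * (Vq - 1) * Zq ^ 2 - 2 * Zq * (Vq + Wq))
      = 2 * Zq * Wq * (2 + (1 - Wq) * Zq) := by
  set F : PowerSeries (MvPolynomial (Fin 2) ℚ) :=
    PowerSeries.mk fun n => if n = 0 then 0 else s n with hF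
  have hL : F * (4 + Wq * (Vq - 1) * Zq ^ 2 - 2 * Zq * (Vq + Wq))
      = F * PowerSeries.C 4
        + (F * PowerSeries.C (MvPolynomial.X 1 * (MvPolynomial.X 0 - 1)))
            * PowerSeries.X ^ 2
        - (F * PowerSeries.C (2 * (MvPolynomial.X 0 + MvPolynomial.X 1)))
            * PowerSeries.X ^ 1 := by
    rw [Zq, Vq, Wq]
    simp only [map_mul, map_add, map_sub, map_one, map_ofNat]
    ring
  have hR : 2 * Zq * Wq * (2 + (1 - Wq) * Zq)
      = PowerSeries.C (4 * MvPolynomial.X 1) * PowerSeries.X ^ 1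
        + PowerSeries.C (2 * MvPolynomial.X 1 * (1 - MvPolynomial.X 1))
            * PowerSeries.X ^ 2 := by
    rw [Zq, Wq]
    simp only [map_mul, map_add, map_sub, map_one, map_ofNat]
    ring
  rw [hL, hR]
  apply PowerSeries.ext
  intro n
  simp only [map_add, map_sub, PowerSeries.coeff_mul_C, PowerSeries.coeff_mul_X_pow',
    PowerSeries.coeff_C_mul_X_pow, PowerSeries.coeff_C, hF, PowerSeries.coeff_mk]
  rcases n with _ | _ | _ | n
  · norm_num
  · norm_num [h1]; ring
  · have h2 : s 2 = MvPolynomial.C (1/2) * MvPolynomial.X 0 * MvPolynomial.X 1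
        + MvPolynomial.C (1/2) * MvPolynomial.X 1 := by
      have e := hrec 2 le_rfl
      rw [show (2:ℕ) - 1 = 1 from rfl,
        show Finset.Icc 2 1 = (∅ : Finset ℕ) from Finset.Icc_eq_empty (by omega),
        Finset.sum_empty, h1] at e
      rw [e]
      norm_num
    norm_num [h1]
    linear_combination (4 : MvPolynomial (Fin 2) ℚ) * h2
      + ((2 * MvPolynomial.X 0 * MvPolynomial.X 1 + 2 * MvPolynomial.X 1 :
          MvPolynomial (Fin 2) ℚ)) * shelf_hc
  · have hk := shelf_key s hrec n
    norm_num [show n + 3 - 2 = n + 1 from by omega, show n + 3 - 1 = n + 2 from by omega]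
    linear_combination hk
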